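/- For a monotone submodular set function f on a finite ground set with f(∅) = 0, the greedy algorithm that iteratively adds the element with maximum marginal gain, run for K steps, returns a set A_greedy with f(A_greedy) ≥ (1 - 1/e)·max_{|A| ≤ K} f(A). -/
import Mathlib

lemma submod_sum_bound (Ω : Type) [DecidableEq Ω] (f : Finset Ω → ℝ)
    (hmono : ∀ S T : Finset Ω, S ⊆ T → f S ≤ f T)
    (hsub : ∀ S T : Finset Ω, S ⊆ T → ∀ x : Ω, x ∉ T →
      f (insert x T) - f T ≤ f (insert x S) - f S)
    (B S : Finset Ω) :
    f (S ∪ B) ≤ f S + ∑ x ∈ B, (f (insert x S) - f S) := by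
  induction B using Finset.induction_on with
  | empty => simp
  | @insert a B ha ih =>
    rw [Finset.sum_insert ha]
    have hins : S ∪ insert a B = insert a (S ∪ B) := by
      ext y; simp [or_comm, or_assoc, or_left_comm]
    rw [hins]
    by_cases hmem : a ∈ S ∪ B
    · rw [Finset.insert_eq_self.mpr hmem]
      have h0 : (0:ℝ) ≤ f (insert a S) - f S :=
        sub_nonneg.mpr (hmono _ _ (Finset.subset_insert _ _))
      linarith
    · have := hsub S (S ∪ B) Finset.subset_union_left a hmem
      linarith

theorem greedy_submodular_approximation (Ω : Type) [Fintype Ω] [DecidableEq Ω]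
    (f : Finset Ω → ℝ)
    (hmono : ∀ S T : Finset Ω, S ⊆ T → f S ≤ f T)
    (hsub : ∀ S T : Finset Ω, S ⊆ T → ∀ x : Ω, x ∉ T →
      f (insert x T) - f T ≤ f (insert x S) - f S)
    (hempty : f ∅ = 0)
    (K : ℕ) (A : ℕ → Finset Ω) (hA0 : A 0 = ∅)
    (hgreedy : ∀ i < K, ∃ x : Ω, A (i + 1) = insert x (A i) ∧
      ∀ y : Ω, f (insert y (A i)) ≤ f (insert x (A i))) :
    ∀ B : Finset Ω, B.card ≤ K → (1 - 1 / Real.exp 1) * f B ≤ f (A K) := by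
  intro B hB
  rcases Nat.eq_zero_or_pos K with hK0 | hKpos
  · subst hK0
    have : B = ∅ := Finset.card_eq_zero.mp (Nat.le_zero.mp hB)
    simp [this, hA0, hempty]
  have hfB : (0:ℝ) ≤ f B := by
    have := hmono ∅ B (Finset.empty_subset B); linarith [hempty ▸ this]
  -- per-step bound: f B - f (A (i+1)) ≤ (1 - 1/K) * (f B - f (A i))
  have step : ∀ i < K, f B - f (A (i+1)) ≤ (1 - 1/(K:ℝ)) * (f B - f (A i)) := by
    intro i hi
    obtain ⟨x, hx, hxmax⟩ := hgreedy i hi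
    have hgain : f (A i) ≤ f (A (i+1)) := by
      rw [hx]; exact hmono _ _ (Finset.subset_insert _ _)
    have h1 : f B ≤ f (A i ∪ B) := hmono _ _ Finset.subset_union_right
    have h2 := submod_sum_bound Ω f hmono hsub B (A i)
    have h3 : ∑ y ∈ B, (f (insert y (A i)) - f (A i))
        ≤ ∑ _y ∈ B, (f (A (i+1)) - f (A i)) := by
      apply Finset.sum_le_sum
      intro y _
      have := hxmax y
      rw [hx]; linarith
    rw [Finset.sum_const, nsmul_eq_mul] at h3
    have h4 : (B.card : ℝ) * (f (A (i+1)) - f (A i)) ≤ (K:ℝ) * (f (A (i+1)) - f (A i)) := by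
      apply mul_le_mul_of_nonneg_right _ (by linarith)
      exact_mod_cast hB
    have hK1 : (1:ℝ) ≤ (K:ℝ) := by exact_mod_cast hKpos
    have hKne : (K:ℝ) ≠ 0 := by positivity
    -- f B ≤ f (A i) + K * gain
    have h5 : f B ≤ f (A i) + (K:ℝ) * (f (A (i+1)) - f (A i)) := by linarith
    have hpos : (0:ℝ) < (K:ℝ) := by exact_mod_cast hKpos
    have h6 := mul_le_mul_of_nonneg_left
      (show f B - f (A i) ≤ (K:ℝ) * (f (A (i+1)) - f (A i)) by linarith)
      (le_of_lt (one_div_pos.mpr hpos))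
    have h7 : (1/(K:ℝ)) * ((K:ℝ) * (f (A (i+1)) - f (A i))) = f (A (i+1)) - f (A i) := by
      field_simp
    nlinarith [h6, h7]
  -- iterate: f B - f (A i) ≤ (1-1/K)^i * f B
  have iter : ∀ i ≤ K, f B - f (A i) ≤ (1 - 1/(K:ℝ))^i * f B := by
    intro i hi
    induction i with
    | zero => simp [hA0, hempty]
    | succ n ihn =>
      have hn : n ≤ K := Nat.le_of_succ_le hi
      have hnK : n < K := hi
      have hstep := step n hnK
      have hcoef : (0:ℝ) ≤ 1 - 1/(K:ℝ) := by
        have hK1 : (1:ℝ) ≤ (K:ℝ) := by exact_mod_cast hKpos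
        have : 1/(K:ℝ) ≤ 1 := by
          rw [div_le_one (by linarith)]; linarith
        linarith
      calc f B - f (A (n+1)) ≤ (1 - 1/(K:ℝ)) * (f B - f (A n)) := hstep
        _ ≤ (1 - 1/(K:ℝ)) * ((1 - 1/(K:ℝ))^n * f B) :=
            mul_le_mul_of_nonneg_left (ihn hn) hcoef
        _ = (1 - 1/(K:ℝ))^(n+1) * f B := by ring
  have hKfin := iter K le_rfl
  -- (1-1/K)^K ≤ exp(-1)
  have hcoef : (0:ℝ) ≤ 1 - 1/(K:ℝ) := by
    have hK1 : (1:ℝ) ≤ (K:ℝ) := by exact_mod_cast hKpos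
    have : 1/(K:ℝ) ≤ 1 := by rw [div_le_one (by linarith)]; linarith
    linarith
  have hexp : (1 - 1/(K:ℝ))^K ≤ Real.exp (-1) := by
    have h1 : 1 - 1/(K:ℝ) ≤ Real.exp (-(1/(K:ℝ))) := by
      have := Real.add_one_le_exp (-(1/(K:ℝ))); linarith
    calc (1 - 1/(K:ℝ))^K ≤ (Real.exp (-(1/(K:ℝ))))^K := pow_le_pow_left₀ hcoef h1 K
      _ = Real.exp ((K:ℝ) * -(1/(K:ℝ))) := by rw [← Real.exp_nat_mul]
      _ = Real.exp (-1) := by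
          congr 1
          have hKne : (K:ℝ) ≠ 0 := by positivity
          field_simp
  have hfinal : (1 - 1/(K:ℝ))^K * f B ≤ Real.exp (-1) * f B :=
    mul_le_mul_of_nonneg_right hexp hfB
  have : Real.exp (-1) = 1 / Real.exp 1 := by
    rw [Real.exp_neg]; ring
  rw [this] at hfinal
  linarith
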